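/- Let Y = X ∪ {y}, s ≤ t, x ∈ X, and suppose y ∉ [x]_{t,Y}. If [x]_{s,X} = [x]_{t,X} (as subsets of X), then [x]_{s,Y} = [x]_{t,Y} (as subsets of Y). -/
import Mathlib


open scoped Classical

/-- One "short hop" of length at most `s` between points of `Z`. -/
def vrStep (n : ℕ) (Z : Finset (EuclideanSpace ℝ (Fin n))) (s : ℝ)
    (a b : EuclideanSpace ℝ (Fin n)) : Prop :=
  a ∈ Z ∧ b ∈ Z ∧ dist a b ≤ s

/-- `x ~_s y` : there is a chain of points of `Z` from `x` to `y` with hops `≤ s`. -/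
def vrRel (n : ℕ) (Z : Finset (EuclideanSpace ℝ (Fin n))) (s : ℝ)
    (x y : EuclideanSpace ℝ (Fin n)) : Prop :=
  Relation.ReflTransGen (vrStep n Z s) x y

/-- The equivalence class (path component of the Vietoris–Rips complex) of `x` in `Z`. -/
def vrCls (n : ℕ) (Z : Finset (EuclideanSpace ℝ (Fin n))) (s : ℝ)
    (x : EuclideanSpace ℝ (Fin n)) : Set (EuclideanSpace ℝ (Fin n)) :=
  {z | z ∈ Z ∧ vrRel n Z s x z}

/-- The set of pairwise distances (phase change numbers) of `X`. -/
def distSet (n : ℕ) (X : Finset (EuclideanSpace ℝ (Fin n))) : Set ℝ :=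
  {d | ∃ a ∈ X, ∃ b ∈ X, dist a b = d}


lemma vrRel_mono_s (n : ℕ) (Z : Finset (EuclideanSpace ℝ (Fin n))) {s t : ℝ}
    (hst : s ≤ t) {a b : EuclideanSpace ℝ (Fin n)} (h : vrRel n Z s a b) :
    vrRel n Z t a b := by
  induction h with
  | refl => exact Relation.ReflTransGen.refl
  | tail _ hab ih => exact ih.tail ⟨hab.1, hab.2.1, hab.2.2.trans hst⟩

lemma vrRel_mono_Z (n : ℕ) {Z W : Finset (EuclideanSpace ℝ (Fin n))} (hZW : Z ⊆ W)
    {s : ℝ} {a b : EuclideanSpace ℝ (Fin n)} (h : vrRel n Z s a b) :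
    vrRel n W s a b := by
  induction h with
  | refl => exact Relation.ReflTransGen.refl
  | tail _ hab ih => exact ih.tail ⟨hZW hab.1, hZW hab.2.1, hab.2.2⟩

lemma vrRel_avoid (n : ℕ) (X : Finset (EuclideanSpace ℝ (Fin n)))
    (y : EuclideanSpace ℝ (Fin n)) (t : ℝ) (x : EuclideanSpace ℝ (Fin n))
    (hyt : y ∉ vrCls n (insert y X) t x) :
    ∀ z, vrRel n (insert y X) t x z → vrRel n X t x z := by
  intro z hz
  induction hz with
  | refl => exact Relation.ReflTransGen.refl
  | @tail a b hxa hab ih =>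
    obtain ⟨ha, hb, hd⟩ := hab
    have haX : a ∈ X := by
      rcases Finset.mem_insert.mp ha with h' | h'
      · exfalso; subst h'; exact hyt ⟨ha, hxa⟩
      · exact h'
    have hbX : b ∈ X := by
      rcases Finset.mem_insert.mp hb with h' | h'
      · exfalso; subst h'; exact hyt ⟨hb, hxa.tail ⟨ha, hb, hd⟩⟩
      · exact h'
    exact ih.tail ⟨haX, hbX, hd⟩

theorem stmt10 (n : ℕ) (X : Finset (EuclideanSpace ℝ (Fin n)))
    (y : EuclideanSpace ℝ (Fin n)) (hy : y ∉ X) (s t : ℝ) (hst : s ≤ t)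
    (x : EuclideanSpace ℝ (Fin n)) (hx : x ∈ X)
    (hyt : y ∉ vrCls n (insert y X) t x)
    (h : vrCls n X s x = vrCls n X t x) :
    vrCls n (insert y X) s x = vrCls n (insert y X) t x := by
  ext z
  constructor
  · rintro ⟨hzY, hrel⟩
    exact ⟨hzY, vrRel_mono_s n _ hst hrel⟩
  · rintro ⟨hzY, hrel⟩
    have hrelX : vrRel n X t x z := vrRel_avoid n X y t x hyt z hrel
    have hzX : z ∈ X := by
      rcases Finset.mem_insert.mp hzY with h' | h'
      · exfalso; subst h'; exact hyt ⟨hzY, hrel⟩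
      · exact h'
    have : z ∈ vrCls n X s x := h ▸ (⟨hzX, hrelX⟩ : z ∈ vrCls n X t x)
    exact ⟨hzY, vrRel_mono_Z n (Finset.subset_insert y X) this.2⟩
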